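/- Let C be a Polish space with a countable base B = {B_n : n ∈ ω} such that each B_n is homeomorphic to C. If C contains a Q-set of cardinality ℵ₂, then C contains a dense Q-set Z with Δ(Z) = ℵ₂ (every non-empty relatively open subset of Z has cardinality ℵ₂). -/

import Mathlib

open Set Cardinal TopologicalSpace

/-- A subset `s` of a topological space is discrete (as a subspace) iff every point of `s`
has an open neighbourhood in the ambient space meeting `s` only in that point. -/
def IsDiscreteSubset {X : Type*} [TopologicalSpace X] (s : Set X) : Prop :=
  ∀ x ∈ s, ∃ U : Set X, IsOpen U ∧ U ∩ s = {x}

/-- `dis X`: the least cardinality of a family of discrete subsets covering `X`. -/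
noncomputable def dis (X : Type*) [TopologicalSpace X] : Cardinal :=
  sInf {c : Cardinal | ∃ 𝒟 : Set (Set X), #𝒟 = c ∧ (∀ D ∈ 𝒟, IsDiscreteSubset D) ∧
    ⋃₀ 𝒟 = Set.univ}

/-- `Delta X`: the dispersion character, i.e. the least cardinality of a nonempty open set. -/
noncomputable def Delta (X : Type*) [TopologicalSpace X] : Cardinal :=
  sInf {c : Cardinal | ∃ U : Set X, IsOpen U ∧ U.Nonempty ∧ #U = c}

/-- A Q-set: an uncountable set every subset of which is a relative F_σ. -/
def IsQSet {C : Type*} [TopologicalSpace C] (Y : Set C) : Prop :=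
  Cardinal.aleph0 < #Y ∧
  ∀ S : Set Y, ∃ F : ℕ → Set Y, (∀ n, IsClosed (F n)) ∧ S = ⋃ n, F n


namespace Statement9Aux

variable {C : Type*} [TopologicalSpace C]

lemma qp_transfer {X Y : Type*} [TopologicalSpace X] [TopologicalSpace Y] {r : X → Y}
    (hc : Continuous r) (hb : Function.Bijective r)
    (hY : ∀ S : Set Y, ∃ F : ℕ → Set Y, (∀ j, IsClosed (F j)) ∧ S = ⋃ j, F j)
    (S : Set X) : ∃ F : ℕ → Set X, (∀ j, IsClosed (F j)) ∧ S = ⋃ j, F j := by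
  obtain ⟨F, hF, hSF⟩ := hY (r '' S)
  refine ⟨fun j => r ⁻¹' F j, fun j => (hF j).preimage hc, ?_⟩
  calc S = r ⁻¹' (r '' S) := (hb.injective.preimage_image S).symm
  _ = ⋃ j, r ⁻¹' F j := by rw [hSF, preimage_iUnion]

lemma nwd_union {P N : Set C} (hP : IsClosed P) (hPi : interior P = ∅)
    (hNi : interior N = ∅) : interior (P ∪ N) = ∅ := by
  have h1 : interior (P ∪ N) ∩ Pᶜ ⊆ interior N := by
    apply interior_maximal _ (isOpen_interior.inter hP.isOpen_compl)
    rintro x ⟨hx, hxP⟩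
    rcases interior_subset hx with h | h
    · exact absurd h hxP
    · exact h
  rw [hNi, subset_empty_iff, ← disjoint_iff_inter_eq_empty, disjoint_compl_right_iff_subset] at h1
  have := interior_maximal h1 isOpen_interior
  rwa [hPi, subset_empty_iff] at this

lemma nwd_closure {V M : Set C} (hV : IsOpen V) (hMV : M ⊆ V)
    (hrel : closure M ∩ V ⊆ M) (hint : interior M = ∅) :
    interior (closure M) = ∅ := by
  have h1 : interior (closure M) ∩ V ⊆ interior M := by
    apply interior_maximal _ (isOpen_interior.inter hV)
    exact fun x hx => hrel ⟨interior_subset hx.1, hx.2⟩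
  rw [hint, subset_empty_iff] at h1
  have h2 : interior (closure M) ∩ M = ∅ := by
    rw [← subset_empty_iff, ← h1]
    exact fun x hx => ⟨hx.1, hMV hx.2⟩
  have h3 : interior (closure M) ∩ closure M = ∅ := by
    have := IsOpen.inter_closure (isOpen_interior (s := closure M)) (t := M)
    rw [h2, closure_empty, subset_empty_iff] at this
    exact this
  rw [← subset_empty_iff, ← h3]
  exact fun x hx => ⟨hx, interior_subset hx⟩

lemma open_eq_iUnion_closed [PolishSpace C] {V : Set C} (hV : IsOpen V) :
    ∃ F : ℕ → Set C, (∀ k, IsClosed (F k)) ∧ V = ⋃ k, F k := by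
  letI := upgradeIsCompletelyMetrizable C
  obtain ⟨T, hTopen, hTc, hTeq⟩ := hV.isClosed_compl.isGδ
  obtain ⟨f, hf⟩ := (hTc.insert Set.univ).exists_eq_range (insert_nonempty _ _)
  refine ⟨fun k => (f k)ᶜ, fun k => ?_, ?_⟩
  · have : f k ∈ insert Set.univ T := hf ▸ mem_range_self k
    rcases this with h | h
    · simp only [h]; exact isClosed_compl_iff.mpr isOpen_univ
    · exact isClosed_compl_iff.mpr (hTopen _ h)
  · have h1 : Vᶜ = ⋂ k, f k := by
      rw [hTeq]
      have h0 : ⋂₀ T = ⋂₀ (insert Set.univ T) := by rw [sInter_insert]; simp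
      rw [h0, hf, sInter_range]
    have h2 : V = (⋂ k, f k)ᶜ := by rw [← h1, compl_compl]
    rw [h2, compl_iInter]


structure Ctx (C : Type*) [TopologicalSpace C] : Type _ where
  B : ℕ → Set C
  hbasis : IsTopologicalBasis (Set.range B)
  hhomeo : ∀ n, Nonempty (↥(B n) ≃ₜ C)
  A : Set C
  KK : Set C
  hAK : A ⊆ KK
  hKcl : IsClosed KK
  hKint : interior KK = ∅
  hAQ : ∀ S : Set ↥A, ∃ F : ℕ → Set ↥A, (∀ j, IsClosed (F j)) ∧ S = ⋃ j, F j
  hAcard : #↥A = Cardinal.aleph 2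

structure GoodAt (ctx : Ctx C) (n : ℕ) (P : Set C) (t : Set C × Set C × Set C) : Prop where
  openV : IsOpen t.2.2
  subB : t.2.2 ⊆ ctx.B n
  disjP : t.2.2 ∩ P = ∅
  TsubV : t.1 ⊆ t.2.2
  TsubN : t.1 ⊆ t.2.1
  closedN : IsClosed t.2.1
  intN : interior t.2.1 = ∅
  qp : ∀ S : Set ↥t.1, ∃ F : ℕ → Set ↥t.1, (∀ j, IsClosed (F j)) ∧ S = ⋃ j, F j
  card : #↥t.1 = Cardinal.aleph 2

lemma exStep (ctx : Ctx C) (n : ℕ) {P : Set C} (hP : IsClosed P) (hPi : interior P = ∅) :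
    ∃ t, GoodAt ctx n P t := by
  have hAne : Nonempty ↥ctx.A := mk_ne_zero_iff.mp (by rw [ctx.hAcard]; exact (aleph_pos 2).ne')
  have hCne : Nonempty C := ⟨hAne.some.1⟩
  have hBopen : IsOpen (ctx.B n) := ctx.hbasis.isOpen ⟨n, rfl⟩
  have hBne : (ctx.B n).Nonempty := by
    have := (ctx.hhomeo n).some.symm hCne.some
    exact ⟨this.1, this.2⟩
  have hPcd : Dense Pᶜ := interior_eq_empty_iff_dense_compl.mp hPi
  have hO : IsOpen (ctx.B n ∩ Pᶜ) := hBopen.inter hP.isOpen_compl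
  obtain ⟨x, hx⟩ := hPcd.inter_open_nonempty _ hBopen hBne
  obtain ⟨t, ⟨k, rfl⟩, hxt, htO⟩ := ctx.hbasis.exists_subset_of_mem_open hx hO
  obtain ⟨f⟩ := ctx.hhomeo k
  set V := ctx.B k with hVdef
  have hVopen : IsOpen V := ctx.hbasis.isOpen ⟨k, rfl⟩
  set T : Set C := Subtype.val '' (f ⁻¹' ctx.A) with hTdef
  set M : Set C := Subtype.val '' (f ⁻¹' ctx.KK) with hMdef
  have hTV : T ⊆ V := by rintro y ⟨s, _, rfl⟩; exact s.2
  have hMV : M ⊆ V := by rintro y ⟨s, _, rfl⟩; exact s.2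
  have hTM : T ⊆ M := image_mono (preimage_mono ctx.hAK)
  -- interior M = ∅
  have hMint : interior M = ∅ := by
    have hopen : IsOpen (f '' (Subtype.val ⁻¹' interior M)) := by
      rw [f.isOpen_image]
      exact isOpen_interior.preimage continuous_subtype_val
    have hsub : f '' (Subtype.val ⁻¹' interior M) ⊆ ctx.KK := by
      rintro z ⟨w, hw, rfl⟩
      have hw' : (w : C) ∈ M := interior_subset hw
      have : w ∈ f ⁻¹' ctx.KK := by
        rw [← preimage_image_eq (f ⁻¹' ctx.KK) Subtype.val_injective]
        exact hw'
      exact this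
    have h0 : f '' (Subtype.val ⁻¹' interior M) ⊆ interior ctx.KK := interior_maximal hsub hopen
    rw [ctx.hKint, subset_empty_iff, image_eq_empty] at h0
    rw [eq_empty_iff_forall_notMem]
    intro y hy
    have hyV : y ∈ V := hMV (interior_subset hy)
    have : (⟨y, hyV⟩ : ↥V) ∈ Subtype.val ⁻¹' interior M := hy
    rw [h0] at this
    exact this
  -- closure M ∩ V ⊆ M
  have hrel : closure M ∩ V ⊆ M := by
    obtain ⟨M', hM'cl, hM'eq⟩ := isClosed_induced_iff.mp (ctx.hKcl.preimage f.continuous)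
    have hMM' : M = V ∩ M' := by
      rw [hMdef, ← hM'eq, Subtype.image_preimage_coe]
    have hclM : closure M ⊆ M' := by
      rw [hM'cl.closure_subset_iff, hMM']
      exact inter_subset_right
    intro y hy
    rw [hMM']
    exact ⟨hy.2, hclM hy.1⟩
  -- tau
  have hmemA : ∀ s : ↥T, (f ⟨s.1, hTV s.2⟩ : C) ∈ ctx.A := by
    rintro ⟨y, w, hw, rfl⟩
    have : (⟨(w : C), hTV ⟨w, hw, rfl⟩⟩ : ↥V) = w := Subtype.ext rfl
    rw [this]
    exact hw
  set τ : ↥T → ↥ctx.A := fun s => ⟨f ⟨s.1, hTV s.2⟩, hmemA s⟩ with hτdef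
  have hτc : Continuous τ :=
    Continuous.subtype_mk (f.continuous.comp (Continuous.subtype_mk continuous_subtype_val _)) _
  have hτbij : Function.Bijective τ := by
    constructor
    · intro a b hab
      have h1 : f ⟨a.1, hTV a.2⟩ = f ⟨b.1, hTV b.2⟩ := Subtype.ext_iff.mp hab
      have h2 := f.injective h1
      exact Subtype.ext (congrArg (fun w : ↥V => (w : C)) h2)
    · intro a
      have hmem : f.symm a.1 ∈ f ⁻¹' ctx.A := by
        simp only [mem_preimage, Homeomorph.apply_symm_apply]
        exact a.2
      refine ⟨⟨(f.symm a.1 : C), ⟨f.symm a.1, hmem, rfl⟩⟩, ?_⟩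
      apply Subtype.ext
      show (f ⟨(f.symm a.1 : C), _⟩ : C) = a.1
      have : (⟨(f.symm a.1 : C), hTV ⟨f.symm a.1, hmem, rfl⟩⟩ : ↥V) = f.symm a.1 :=
        Subtype.ext rfl
      rw [this, Homeomorph.apply_symm_apply]
  refine ⟨(T, closure M, V), hVopen, htO.trans inter_subset_left, ?_, hTV,
    hTM.trans subset_closure, isClosed_closure, nwd_closure hVopen hMV hrel hMint,
    fun S => qp_transfer hτc hτbij ctx.hAQ S, ?_⟩
  · rw [eq_empty_iff_forall_notMem]
    rintro y ⟨hyV, hyP⟩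
    exact (htO hyV).2 hyP
  · rw [mk_congr (Equiv.ofBijective τ hτbij)]
    exact ctx.hAcard

open Classical in
noncomputable def pick (ctx : Ctx C) (n : ℕ) (P : Set C) : Set C × Set C × Set C :=
  if h : IsClosed P ∧ interior P = ∅ then (exStep ctx n h.1 h.2).choose else (∅, ∅, ∅)

lemma pick_good (ctx : Ctx C) (n : ℕ) {P : Set C} (h1 : IsClosed P) (h2 : interior P = ∅) :
    GoodAt ctx n P (pick ctx n P) := by
  classical
  rw [pick, dif_pos ⟨h1, h2⟩]
  exact (exStep ctx n h1 h2).choose_spec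

noncomputable def PAcc (ctx : Ctx C) : ℕ → Set C
  | 0 => ∅
  | n + 1 => PAcc ctx n ∪ (pick ctx n (PAcc ctx n)).2.1

lemma PAcc_spec (ctx : Ctx C) : ∀ n, IsClosed (PAcc ctx n) ∧ interior (PAcc ctx n) = ∅ := by
  intro n
  induction n with
  | zero => exact ⟨isClosed_empty, interior_empty⟩
  | succ n ih =>
    have hg := pick_good ctx n ih.1 ih.2
    exact ⟨ih.1.union hg.closedN, nwd_union ih.1 ih.2 hg.intN⟩

noncomputable def TT (ctx : Ctx C) (n : ℕ) : Set C := (pick ctx n (PAcc ctx n)).1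
noncomputable def NN (ctx : Ctx C) (n : ℕ) : Set C := (pick ctx n (PAcc ctx n)).2.1
noncomputable def VV (ctx : Ctx C) (n : ℕ) : Set C := (pick ctx n (PAcc ctx n)).2.2

lemma good (ctx : Ctx C) (n : ℕ) : GoodAt ctx n (PAcc ctx n) (pick ctx n (PAcc ctx n)) :=
  pick_good ctx n (PAcc_spec ctx n).1 (PAcc_spec ctx n).2

lemma TT_card (ctx : Ctx C) (n : ℕ) : #↥(TT ctx n) = Cardinal.aleph 2 := (good ctx n).card

lemma TT_qp (ctx : Ctx C) (n : ℕ) :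
    ∀ S : Set ↥(TT ctx n), ∃ F : ℕ → Set ↥(TT ctx n), (∀ j, IsClosed (F j)) ∧ S = ⋃ j, F j :=
  (good ctx n).qp

lemma VV_open (ctx : Ctx C) (n : ℕ) : IsOpen (VV ctx n) := (good ctx n).openV

lemma VV_subB (ctx : Ctx C) (n : ℕ) : VV ctx n ⊆ ctx.B n := (good ctx n).subB

lemma VV_disjP (ctx : Ctx C) (n : ℕ) : VV ctx n ∩ PAcc ctx n = ∅ := (good ctx n).disjP

lemma TT_sub_VV (ctx : Ctx C) (n : ℕ) : TT ctx n ⊆ VV ctx n := (good ctx n).TsubV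

lemma TT_sub_NN (ctx : Ctx C) (n : ℕ) : TT ctx n ⊆ NN ctx n := (good ctx n).TsubN

lemma NN_closed (ctx : Ctx C) (n : ℕ) : IsClosed (NN ctx n) := (good ctx n).closedN

lemma PAcc_mono (ctx : Ctx C) {m n : ℕ} (h : m ≤ n) : PAcc ctx m ⊆ PAcc ctx n := by
  induction h with
  | refl => exact subset_rfl
  | step h ih => exact ih.trans subset_union_left

lemma NN_sub_PAcc (ctx : Ctx C) {m n : ℕ} (h : m < n) : NN ctx m ⊆ PAcc ctx n := by
  have h1 : NN ctx m ⊆ PAcc ctx (m + 1) := subset_union_right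
  exact h1.trans (PAcc_mono ctx h)

noncomputable def ZZ (ctx : Ctx C) : Set C := ⋃ n, TT ctx n

lemma TT_sub_ZZ (ctx : Ctx C) (n : ℕ) : TT ctx n ⊆ ZZ ctx := subset_iUnion (TT ctx) n

lemma sep (ctx : Ctx C) (n : ℕ) : ZZ ctx ∩ (NN ctx n ∩ VV ctx n) = TT ctx n := by
  apply subset_antisymm
  · rintro z ⟨hzZ, hzN, hzV⟩
    obtain ⟨m, hm⟩ := mem_iUnion.mp hzZ
    rcases lt_trichotomy m n with h | h | h
    · exact absurd ⟨hzV, NN_sub_PAcc ctx h (TT_sub_NN ctx m hm)⟩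
        (eq_empty_iff_forall_notMem.mp (VV_disjP ctx n) z)
    · exact h ▸ hm
    · exact absurd ⟨TT_sub_VV ctx m hm, NN_sub_PAcc ctx h hzN⟩
        (eq_empty_iff_forall_notMem.mp (VV_disjP ctx m) z)
  · intro z hz
    exact ⟨TT_sub_ZZ ctx n hz, TT_sub_NN ctx n hz, TT_sub_VV ctx n hz⟩


lemma buildAK {C : Type*} [TopologicalSpace C] [PolishSpace C]
    (B : ℕ → Set C) (hbasis : IsTopologicalBasis (Set.range B))
    (hQ : ∃ Y : Set C, (∀ S : Set ↥Y, ∃ F : ℕ → Set ↥Y, (∀ j, IsClosed (F j)) ∧ S = ⋃ j, F j)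
      ∧ #↥Y = Cardinal.aleph 2) :
    ∃ A KK : Set C, A ⊆ KK ∧ IsClosed KK ∧ interior KK = ∅ ∧
      (∀ S : Set ↥A, ∃ F : ℕ → Set ↥A, (∀ j, IsClosed (F j)) ∧ S = ⋃ j, F j) ∧
      #↥A = Cardinal.aleph 2 := by
  classical
  obtain ⟨Y, hYQ, hYcard⟩ := hQ
  -- C is uncountable
  have hYunc : ¬ Y.Countable := by
    intro h
    have h1 : #↥Y ≤ ℵ₀ := @mk_le_aleph0 _ h.to_subtype
    rw [hYcard, ← aleph_zero] at h1
    exact absurd (aleph_le_aleph.mp h1) (by norm_num)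
  have hCunc : ¬ (Set.univ : Set C).Countable := fun h => hYunc (h.mono (subset_univ Y))
  obtain ⟨f, -, hfc, hfi⟩ := isClosed_univ.exists_nat_bool_injection_of_not_countable hCunc
  -- interleaving maps
  set j : (ℕ → Bool) → (ℕ → Bool) → (ℕ → Bool) :=
    fun α z n => if Even n then α (n / 2) else z (n / 2) with hjdef
  have hjc : ∀ α, Continuous (j α) := by
    intro α
    apply continuous_pi
    intro n
    by_cases h : Even n
    · simp only [hjdef, if_pos h]; exact continuous_const
    · simp only [hjdef, if_neg h]; exact continuous_apply _
  have hjinj : ∀ α, Function.Injective (j α) := by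
    intro α z w hzw
    funext m
    have := congrFun hzw (2 * m + 1)
    have he : ¬ Even (2 * m + 1) := by simp [Nat.even_add_one, parity_simps]
    have hd : (2 * m + 1) / 2 = m := by omega
    simpa [hjdef, he, hd] using this
  have hjeven : ∀ α z m, j α z (2 * m) = α m := by
    intro α z m
    have he : Even (2 * m) := ⟨m, by ring⟩
    have hd : (2 * m) / 2 = m := by omega
    simp [hjdef, he, hd]
  have hdisj : ∀ α β, α ≠ β → Set.range (f ∘ j α) ∩ Set.range (f ∘ j β) = ∅ := by
    intro α β hne
    rw [eq_empty_iff_forall_notMem]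
    rintro x ⟨⟨z, hz⟩, ⟨w, hw⟩⟩
    apply hne
    have h1 : j α z = j β w := hfi (hz.trans hw.symm)
    funext m
    have := congrFun h1 (2 * m)
    rwa [hjeven, hjeven] at this
  -- pick a good α
  set Bad : Set (ℕ → Bool) := {α | (interior (Set.range (f ∘ j α))).Nonempty} with hBaddef
  have hBadc : Bad.Countable := by
    have hsel : ∀ α ∈ Bad, ∃ n : ℕ, (B n).Nonempty ∧ B n ⊆ Set.range (f ∘ j α) := by
      intro α hα
      obtain ⟨x, hx⟩ := hα
      obtain ⟨t, ⟨n, rfl⟩, hxt, hsub⟩ := hbasis.exists_subset_of_mem_open hx isOpen_interior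
      exact ⟨n, ⟨x, hxt⟩, hsub.trans interior_subset⟩
    choose! ν hν1 hν2 using hsel
    rw [countable_iff_exists_injOn]
    refine ⟨ν, ?_⟩
    intro α hα β hβ hab
    by_contra hne
    have h1 : B (ν α) ⊆ Set.range (f ∘ j α) ∩ Set.range (f ∘ j β) := by
      intro x hx
      exact ⟨hν2 α hα hx, hν2 β hβ (hab ▸ hx)⟩
    rw [hdisj α β hne, subset_empty_iff] at h1
    exact absurd h1 (Set.nonempty_iff_ne_empty.mp (hν1 α hα))
  have hexα : ∃ α, α ∉ Bad := by
    by_contra h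
    push_neg at h
    have h1 : (Set.univ : Set (ℕ → Bool)).Countable := by
      have : Bad = Set.univ := eq_univ_of_forall h
      exact this ▸ hBadc
    have h2 : #(ℕ → Bool) ≤ ℵ₀ := by
      have := h1.to_subtype
      have h4 : #↥(Set.univ : Set (ℕ → Bool)) ≤ ℵ₀ := @mk_le_aleph0 _ this
      rwa [mk_univ] at h4
    have h3 : #(ℕ → Bool) = 2 ^ (ℵ₀ : Cardinal) := by
      rw [← Cardinal.mk_bool, ← Cardinal.mk_nat]
      exact (Cardinal.power_def Bool ℕ).symm
    rw [h3] at h2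
    exact absurd (lt_of_lt_of_le (Cardinal.cantor ℵ₀) h2) (lt_irrefl _)
  obtain ⟨α, hα⟩ := hexα
  set g : (ℕ → Bool) → C := f ∘ j α with hgdef
  have hgc : Continuous g := hfc.comp (hjc α)
  have hginj : Function.Injective g := hfi.comp (hjinj α)
  set KK : Set C := Set.range g with hKKdef
  have hKcpt : IsCompact KK := isCompact_range hgc
  have hKcl : IsClosed KK := hKcpt.isClosed
  have hKint : interior KK = ∅ := not_nonempty_iff_eq_empty.mp hα
  -- homeomorphism onto KK
  set E : (ℕ → Bool) ≃ ↥KK := Equiv.ofInjective g hginj with hEdef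
  have hEc : Continuous (E : (ℕ → Bool) → ↥KK) := by
    apply continuous_induced_rng.mpr
    exact hgc
  set hK : (ℕ → Bool) ≃ₜ ↥KK := Continuous.homeoOfEquivCompactToT2 hEc with hKdef
  have hKval : ∀ z, ((hK z : ↥KK) : C) = g z := fun z => rfl
  -- marker map
  set e : C → ℕ → Bool := fun x n => if x ∈ B n then true else false with hedef
  have he_mem : ∀ x n, (e x n = true ↔ x ∈ B n) := by
    intro x n
    by_cases h : x ∈ B n <;> simp [hedef, h]
  have he_inj : Function.Injective e := by
    intro x y hxy
    by_contra hne
    obtain ⟨U, W, hU, hW, hxU, hyW, hUW⟩ := t2_separation hne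
    obtain ⟨t, ⟨n, rfl⟩, hxt, htU⟩ := hbasis.exists_subset_of_mem_open hxU hU
    have h1 : e x n = true := (he_mem x n).mpr hxt
    have h2 : e y n = false := by
      have : y ∉ B n := fun hy => Set.disjoint_left.mp hUW (htU hy) hyW
      simp [hedef, this]
    have : (true : Bool) = false := by rw [← h1, hxy, h2]
    exact Bool.noConfusion this
  -- the Q-set copy
  set A : Set C := (fun y => g (e y)) '' Y with hAdef
  have hAK : A ⊆ KK := by rintro a ⟨y, _, rfl⟩; exact ⟨e y, rfl⟩
  have hge_inj : Function.Injective (fun y => g (e y)) := fun a b h => he_inj (hginj h)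
  have hmem' : ∀ a : ↥A, ∃ y, y ∈ Y ∧ g (e y) = a.1 := fun a => a.2
  set yfun : ↥A → C := fun a => (hmem' a).choose with hyfundef
  have hyY : ∀ a, yfun a ∈ Y := fun a => (hmem' a).choose_spec.1
  have hy_spec : ∀ a, g (e (yfun a)) = a.1 := fun a => (hmem' a).choose_spec.2
  set ψ : ↥A → (ℕ → Bool) := fun a => hK.symm ⟨a.1, hAK a.2⟩ with hψdef
  have hψc : Continuous ψ :=
    hK.symm.continuous.comp (Continuous.subtype_mk continuous_subtype_val _)
  have hψe : ∀ a, ψ a = e (yfun a) := by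
    intro a
    apply hginj
    have h1 : g (ψ a) = a.1 := by
      have h2 := hK.apply_symm_apply ⟨a.1, hAK a.2⟩
      calc g (ψ a) = ((hK (ψ a) : ↥KK) : C) := (hKval _).symm
      _ = a.1 := by rw [h2]
    rw [h1, hy_spec]
  have hyc : Continuous yfun := by
    rw [continuous_def]
    intro U hU
    rw [isOpen_iff_forall_mem_open]
    intro a ha
    obtain ⟨t, ⟨i, rfl⟩, hyt, htU⟩ := hbasis.exists_subset_of_mem_open ha hU
    refine ⟨{b : ↥A | ψ b i = true}, ?_, ?_, ?_⟩
    · intro b hb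
      have h1 : e (yfun b) i = true := by rw [← hψe]; exact hb
      exact htU ((he_mem _ _).mp h1)
    · have : {b : ↥A | ψ b i = true} = ψ ⁻¹' {v | v i = true} := rfl
      rw [this]
      exact ((isOpen_discrete {true}).preimage (continuous_apply i)).preimage hψc
    · show ψ a i = true
      rw [hψe]
      exact (he_mem _ _).mpr hyt
  set ρ : ↥A → ↥Y := fun a => ⟨yfun a, hyY a⟩ with hρdef
  have hρc : Continuous ρ := hyc.subtype_mk _
  have hρbij : Function.Bijective ρ := by
    constructor
    · intro a b hab
      have h1 : yfun a = yfun b := congrArg (fun w : ↥Y => (w : C)) hab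
      apply Subtype.ext
      rw [← hy_spec a, ← hy_spec b, h1]
    · intro y
      refine ⟨⟨g (e y.1), ⟨y.1, y.2, rfl⟩⟩, ?_⟩
      apply Subtype.ext
      show yfun _ = y.1
      apply hge_inj
      exact hy_spec _
  exact ⟨A, KK, hAK, hKcl, hKint, fun S => qp_transfer hρc hρbij hYQ S,
    (mk_congr (Equiv.ofBijective ρ hρbij)).trans hYcard⟩


variable {C : Type*} [TopologicalSpace C]

lemma aleph0_lt_aleph_two : ℵ₀ < Cardinal.aleph 2 := by
  rw [← Cardinal.aleph_zero]
  exact aleph_lt_aleph.mpr (by norm_num)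

lemma TT_nonempty (ctx : Ctx C) (n : ℕ) : Nonempty ↥(TT ctx n) :=
  mk_ne_zero_iff.mp (by rw [TT_card ctx n]; exact (aleph_pos 2).ne')

lemma ZZ_dense (ctx : Ctx C) : Dense (ZZ ctx) := by
  rw [dense_iff_inter_open]
  rintro U hU ⟨x, hx⟩
  obtain ⟨t, ⟨n, rfl⟩, hxt, htU⟩ := ctx.hbasis.exists_subset_of_mem_open hx hU
  obtain ⟨⟨z, hz⟩⟩ := TT_nonempty ctx n
  exact ⟨z, htU (VV_subB ctx n (TT_sub_VV ctx n hz)), TT_sub_ZZ ctx n hz⟩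

lemma ZZ_card (ctx : Ctx C) : #↥(ZZ ctx) = Cardinal.aleph 2 := by
  apply le_antisymm
  · -- upper bound
    have hEq : ∀ n, ↥(TT ctx n) ≃ ↥ctx.A :=
      fun n => Classical.choice (Cardinal.eq.mp ((TT_card ctx n).trans ctx.hAcard.symm))
    have hsel : ∀ z : ↥(ZZ ctx), ∃ n, z.1 ∈ TT ctx n := fun z => mem_iUnion.mp z.2
    choose ν hν using hsel
    set Φ : ↥(ZZ ctx) → ℕ × ↥ctx.A := fun z => (ν z, hEq (ν z) ⟨z.1, hν z⟩) with hΦdef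
    have hΦinj : Function.Injective Φ := by
      intro a b h
      have h2 := congrArg (fun p : ℕ × ↥ctx.A => (((hEq p.1).symm p.2 : ↥(TT ctx p.1)) : C)) h
      simp only [Φ, Equiv.symm_apply_apply] at h2
      exact Subtype.ext h2
    have h1 : #↥(ZZ ctx) ≤ #(ℕ × ↥ctx.A) := mk_le_of_injective hΦinj
    have h2 : #(ℕ × ↥ctx.A) = Cardinal.aleph 2 := by
      rw [mk_prod, Cardinal.mk_nat, Cardinal.lift_uzero, ctx.hAcard, Cardinal.lift_aleph0]
      exact aleph0_mul_eq (aleph0_le_aleph 2)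
    rwa [h2] at h1
  · rw [← TT_card ctx 0]
    exact mk_le_mk_of_subset (TT_sub_ZZ ctx 0)

lemma ZZ_qprop [PolishSpace C] (ctx : Ctx C) (S : Set ↥(ZZ ctx)) :
    ∃ F : ℕ → Set ↥(ZZ ctx), (∀ j, IsClosed (F j)) ∧ S = ⋃ j, F j := by
  classical
  set S' : Set C := Subtype.val '' S with hS'def
  have hS'Z : S' ⊆ ZZ ctx := by rintro _ ⟨s, _, rfl⟩; exact s.2
  have key : ∀ n, ∃ G : ℕ → Set C, (∀ j, IsClosed (G j)) ∧
      S' ∩ TT ctx n = ⋃ j, (G j ∩ (NN ctx n ∩ VV ctx n) ∩ ZZ ctx) := by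
    intro n
    obtain ⟨F, hFcl, hFeq⟩ := TT_qp ctx n (Subtype.val ⁻¹' S' : Set ↥(TT ctx n))
    choose G hGcl hGeq using fun j => isClosed_induced_iff.mp (hFcl j)
    refine ⟨G, hGcl, ?_⟩
    have h1 : Subtype.val '' (Subtype.val ⁻¹' S' : Set ↥(TT ctx n)) = TT ctx n ∩ S' :=
      Subtype.image_preimage_coe _ _
    calc S' ∩ TT ctx n = Subtype.val '' (⋃ j, F j) := by
          rw [← hFeq, h1, inter_comm]
    _ = ⋃ j, Subtype.val '' (F j) := image_iUnion
    _ = ⋃ j, (G j ∩ (NN ctx n ∩ VV ctx n) ∩ ZZ ctx) := by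
          apply iUnion_congr
          intro j
          rw [← hGeq j, Subtype.image_preimage_coe, ← sep ctx n]
          ext x
          constructor
          · rintro ⟨⟨hZ, hNV⟩, hG⟩; exact ⟨⟨hG, hNV⟩, hZ⟩
          · rintro ⟨⟨hG, hNV⟩, hZ⟩; exact ⟨⟨hZ, hNV⟩, hG⟩
  choose G hGcl hGeq using key
  have keyV : ∀ n, ∃ W : ℕ → Set C, (∀ k, IsClosed (W k)) ∧ VV ctx n = ⋃ k, W k :=
    fun n => open_eq_iUnion_closed (VV_open ctx n)
  choose W hWcl hWeq using keyV
  set p := Denumerable.eqv (ℕ × ℕ × ℕ) with hpdef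
  refine ⟨fun m => Subtype.val ⁻¹'
      (G (p.symm m).1 (p.symm m).2.1 ∩ NN ctx (p.symm m).1 ∩ W (p.symm m).1 (p.symm m).2.2),
    fun m => IsClosed.preimage continuous_subtype_val
      (((hGcl _ _).inter (NN_closed ctx _)).inter (hWcl _ _)), ?_⟩
  have hSS' : S = Subtype.val ⁻¹' S' := (preimage_image_eq S Subtype.val_injective).symm
  rw [hSS']
  ext z
  simp only [mem_preimage, mem_iUnion]
  constructor
  · intro hzS
    obtain ⟨n, hn⟩ := mem_iUnion.mp z.2
    have h1 : z.1 ∈ ⋃ j, (G n j ∩ (NN ctx n ∩ VV ctx n) ∩ ZZ ctx) := by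
      rw [← hGeq n]; exact ⟨hzS, hn⟩
    obtain ⟨j, hj⟩ := mem_iUnion.mp h1
    have h2 : z.1 ∈ ⋃ k, W n k := by rw [← hWeq n]; exact hj.1.2.2
    obtain ⟨k, hk⟩ := mem_iUnion.mp h2
    refine ⟨p (n, j, k), ?_⟩
    simp only [Equiv.symm_apply_apply]
    exact ⟨⟨hj.1.1, hj.1.2.1⟩, hk⟩
  · rintro ⟨m, hm⟩
    have hV : z.1 ∈ VV ctx (p.symm m).1 := by
      rw [hWeq (p.symm m).1]
      exact mem_iUnion.mpr ⟨(p.symm m).2.2, hm.2⟩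
    have h3 : z.1 ∈ S' ∩ TT ctx (p.symm m).1 := by
      rw [hGeq (p.symm m).1]
      exact mem_iUnion.mpr ⟨(p.symm m).2.1, ⟨⟨hm.1.1, hm.1.2, hV⟩, z.2⟩⟩
    exact h3.1

end Statement9Aux


/-- If a Polish space with a countable base of copies of itself contains a Q-set of size ℵ₂,
then it contains a dense Q-set of dispersion character ℵ₂. -/
theorem statement9 (C : Type*) [TopologicalSpace C] [PolishSpace C]
    (B : ℕ → Set C) (hbasis : TopologicalSpace.IsTopologicalBasis (Set.range B))
    (hhomeo : ∀ n, Nonempty (↥(B n) ≃ₜ C))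
    (hQ : ∃ Y : Set C, IsQSet Y ∧ #Y = Cardinal.aleph 2) :
    ∃ Z : Set C, IsQSet Z ∧ Dense Z ∧ Delta ↥Z = Cardinal.aleph 2 := by
  classical
  open Statement9Aux in
  obtain ⟨Y, hYQ, hYcard⟩ := hQ
  obtain ⟨A, KK, hAK, hKcl, hKint, hAQ, hAcard⟩ :=
    Statement9Aux.buildAK B hbasis ⟨Y, hYQ.2, hYcard⟩
  set ctx : Statement9Aux.Ctx C := ⟨B, hbasis, hhomeo, A, KK, hAK, hKcl, hKint, hAQ, hAcard⟩
    with hctx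
  refine ⟨Statement9Aux.ZZ ctx, ⟨?_, Statement9Aux.ZZ_qprop ctx⟩,
    Statement9Aux.ZZ_dense ctx, ?_⟩
  · rw [Statement9Aux.ZZ_card ctx]
    exact Statement9Aux.aleph0_lt_aleph_two
  · have hne : Nonempty ↥(Statement9Aux.ZZ ctx) := by
      obtain ⟨⟨z, hz⟩⟩ := Statement9Aux.TT_nonempty ctx 0
      exact ⟨⟨z, Statement9Aux.TT_sub_ZZ ctx 0 hz⟩⟩
    have hmem : Cardinal.aleph 2 ∈ {c : Cardinal | ∃ U : Set ↥(Statement9Aux.ZZ ctx),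
        IsOpen U ∧ U.Nonempty ∧ #↥U = c} := by
      refine ⟨Set.univ, isOpen_univ, univ_nonempty, ?_⟩
      rw [mk_univ]
      exact Statement9Aux.ZZ_card ctx
    have hlb : ∀ c ∈ {c : Cardinal | ∃ U : Set ↥(Statement9Aux.ZZ ctx),
        IsOpen U ∧ U.Nonempty ∧ #↥U = c}, Cardinal.aleph 2 ≤ c := by
      rintro c ⟨U, hU, ⟨u, hu⟩, rfl⟩
      obtain ⟨U', hU', hpre⟩ := isOpen_induced_iff.mp hU
      have hu' : u.1 ∈ U' := by rw [← hpre] at hu; exact hu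
      obtain ⟨t, ⟨i, rfl⟩, hut, htU'⟩ := hbasis.exists_subset_of_mem_open hu' hU'
      have hTsub : Statement9Aux.TT ctx i ⊆ U' := fun s hs =>
        htU' (Statement9Aux.VV_subB ctx i (Statement9Aux.TT_sub_VV ctx i hs))
      set Ψ : ↥(Statement9Aux.TT ctx i) → ↥U := fun s =>
        ⟨⟨s.1, Statement9Aux.TT_sub_ZZ ctx i s.2⟩, by
          rw [← hpre]; exact hTsub s.2⟩ with hΨ
      have hΨinj : Function.Injective Ψ := by
        intro a b h
        exact Subtype.ext (congrArg (fun x : ↥U => (x.1 : C)) h)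
      rw [← Statement9Aux.TT_card ctx i]
      exact mk_le_of_injective hΨinj
    unfold Delta
    exact le_antisymm (csInf_le' hmem) (le_csInf ⟨_, hmem⟩ hlb)
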